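/- Let Y be a discrete random variable and S a finite set of discrete random variables with Y ∉ S. If W ∈ S is essential for Y (i.e., Y is not conditionally independent of W given S \ {W}), then W belongs to every Markov boundary of Y within S. -/
import Mathlib


open scoped BigOperators

noncomputable section

/-- `p` is a probability mass function on the finite type `Ω`. -/
def IsDist {Ω : Type*} [Fintype Ω] (p : Ω → ℝ) : Prop :=
  (∀ w, 0 ≤ p w) ∧ ∑ w, p w = 1

/-- Total variation distance between two distributions on the same finite type. -/
def tvDist {Ω : Type*} [Fintype Ω] (p q : Ω → ℝ) : ℝ :=
  (∑ w, |p w - q w|) / 2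

variable {ι : Type*} [Fintype ι] [DecidableEq ι]
variable {α : ι → Type*} [∀ i, Fintype (α i)] [∀ i, DecidableEq (α i)]

/-- Marginal probability, under joint pmf `p`, of the event that the variables in the
collection `A` take the values prescribed by the configuration `x`. -/
def margProb (p : (∀ i, α i) → ℝ) (A : Finset ι) (x : ∀ i, α i) : ℝ :=
  ∑ w : ∀ i, α i, if ∀ i ∈ A, w i = x i then p w else 0

/-- Conditional independence of the collections `A` and `B` given the collection `C`:
`f(a, b | c) = f(a | c) f(b | c)` whenever `f(c) > 0` (stated in multiplied-out form). -/
def CondIndep (p : (∀ i, α i) → ℝ) (A B C : Finset ι) : Prop :=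
  ∀ x : ∀ i, α i, 0 < margProb p C x →
    margProb p (A ∪ B ∪ C) x * margProb p C x =
      margProb p (A ∪ C) x * margProb p (B ∪ C) x

/-- `M` is a Markov blanket of the variable `y` within the collection `T`. -/
def MarkovBlanket (p : (∀ i, α i) → ℝ) (y : ι) (T M : Finset ι) : Prop :=
  M ⊆ T ∧ CondIndep p {y} (T \ M) M

/-- `M` is a Markov boundary of `y` within `T`: a Markov blanket no proper subset of
which is a Markov blanket. -/
def MarkovBoundary (p : (∀ i, α i) → ℝ) (y : ι) (T M : Finset ι) : Prop :=
  MarkovBlanket p y T M ∧ ∀ M' ⊂ M, ¬ MarkovBlanket p y T M'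

/-- Mutual information between the collections `A` and `B`
(with the convention `0 · log(junk) = 0` on zero-probability terms). -/
def MI (p : (∀ i, α i) → ℝ) (A B : Finset ι) : ℝ :=
  ∑ w : ∀ i, α i, p w *
    Real.log (margProb p (A ∪ B) w / (margProb p A w * margProb p B w))

/-- Conditional mutual information between collections `A` and `B` given `C`
(with the convention `0 · log(junk) = 0` on zero-probability terms). -/
def CMI (p : (∀ i, α i) → ℝ) (A B C : Finset ι) : ℝ :=
  ∑ w : (∀ i, α i), p w *
    Real.log ((margProb p (A ∪ B ∪ C) w * margProb p C w) /
      (margProb p (A ∪ C) w * margProb p (B ∪ C) w))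


lemma margProb_congr (p : (∀ i, α i) → ℝ) (A : Finset ι) {x x' : ∀ i, α i}
    (h : ∀ i ∈ A, x i = x' i) : margProb p A x = margProb p A x' := by
  unfold margProb
  refine Finset.sum_congr rfl fun w _ => ?_
  refine if_congr ?_ rfl rfl
  constructor <;> intro hw i hi
  · rw [hw i hi]; exact h i hi
  · rw [hw i hi]; exact (h i hi).symm

lemma margProb_mono (p : (∀ i, α i) → ℝ) (hp0 : ∀ w, 0 ≤ p w) {A B : Finset ι}
    (h : B ⊆ A) (x : ∀ i, α i) : margProb p A x ≤ margProb p B x := by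
  unfold margProb
  refine Finset.sum_le_sum fun w _ => ?_
  by_cases hA : ∀ i ∈ A, w i = x i
  · rw [if_pos hA, if_pos (fun i hi => hA i (h hi))]
  · rw [if_neg hA]
    split
    · exact hp0 w
    · exact le_rfl

lemma sum_cond_margProb (p : (∀ i, α i) → ℝ) (A B : Finset ι) (x : ∀ i, α i) :
    (∑ w : ∀ i, α i, if ∀ i ∈ A, w i = x i then margProb p B w else 0)
      = (∏ i ∈ (A ∪ B)ᶜ, (Fintype.card (α i) : ℝ)) * margProb p (A ∩ B) x := by
  have step1 : ∀ w : ∀ i, α i, (if ∀ i ∈ A, w i = x i then margProb p B w else 0)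
      = ∑ v : ∀ i, α i, if (∀ i ∈ A, w i = x i) ∧ (∀ i ∈ B, v i = w i) then p v else 0 := by
    intro w
    by_cases hc : ∀ i ∈ A, w i = x i
    · rw [if_pos hc]
      simp only [eq_true hc, true_and, margProb]
    · simp [hc]
  rw [Finset.sum_congr rfl (fun w _ => step1 w), Finset.sum_comm]
  have key : ∀ v : ∀ i, α i,
      (Finset.univ.filter fun w : ∀ i, α i => (∀ i ∈ A, w i = x i) ∧ ∀ i ∈ B, v i = w i)
      = if ∀ i ∈ A ∩ B, v i = x i then
          Fintype.piFinset (fun i => if i ∈ A then {x i} else if i ∈ B then {v i} else Finset.univ)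
        else ∅ := by
    intro v
    by_cases hcompat : ∀ i ∈ A ∩ B, v i = x i
    · rw [if_pos hcompat]
      ext w
      simp only [Finset.mem_filter, Finset.mem_univ, true_and, Fintype.mem_piFinset]
      constructor
      · rintro ⟨h1, h2⟩ i
        by_cases hiA : i ∈ A
        · simp [hiA, h1 i hiA]
        · by_cases hiB : i ∈ B
          · simp [hiA, hiB, (h2 i hiB).symm]
          · simp [hiA, hiB]
      · intro h
        constructor
        · intro i hiA
          have := h i
          rw [if_pos hiA, Finset.mem_singleton] at this
          exact this
        · intro i hiB
          have := h i
          by_cases hiA : i ∈ A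
          · rw [if_pos hiA, Finset.mem_singleton] at this
            rw [this, ← hcompat i (Finset.mem_inter.2 ⟨hiA, hiB⟩)]
          · rw [if_neg hiA, if_pos hiB, Finset.mem_singleton] at this
            exact this.symm
    · rw [if_neg hcompat]
      push_neg at hcompat
      obtain ⟨i, hi, hne⟩ := hcompat
      ext w
      simp only [Finset.mem_filter, Finset.mem_univ, true_and, Finset.notMem_empty, iff_false]
      rintro ⟨h1, h2⟩
      exact hne ((h2 i (Finset.mem_inter.1 hi).2).trans (h1 i (Finset.mem_inter.1 hi).1))
  have cardval : ∀ v : ∀ i, α i,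
      ((Finset.univ.filter fun w : ∀ i, α i =>
          (∀ i ∈ A, w i = x i) ∧ ∀ i ∈ B, v i = w i).card : ℝ)
      = if ∀ i ∈ A ∩ B, v i = x i then ∏ i ∈ (A ∪ B)ᶜ, (Fintype.card (α i) : ℝ) else 0 := by
    intro v
    rw [key v]
    split
    · rw [Fintype.card_piFinset]
      push_cast
      rw [← Finset.prod_mul_prod_compl (A ∪ B)]
      have h1 : ∏ i ∈ A ∪ B, ((if i ∈ A then ({x i} : Finset (α i))
          else if i ∈ B then {v i} else Finset.univ).card : ℝ) = 1 := by
        refine Finset.prod_eq_one fun i hi => ?_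
        by_cases hiA : i ∈ A
        · simp [hiA]
        · have hiB : i ∈ B := (Finset.mem_union.1 hi).resolve_left hiA
          simp [hiA, hiB]
      rw [h1, one_mul]
      refine Finset.prod_congr rfl fun i hi => ?_
      rw [Finset.mem_compl, Finset.mem_union] at hi
      push_neg at hi
      simp [hi.1, hi.2]
    · simp
  calc (∑ v : ∀ i, α i, ∑ w : ∀ i, α i,
        if (∀ i ∈ A, w i = x i) ∧ ∀ i ∈ B, v i = w i then p v else 0)
      = ∑ v : ∀ i, α i, ((Finset.univ.filter fun w : ∀ i, α i =>
          (∀ i ∈ A, w i = x i) ∧ ∀ i ∈ B, v i = w i).card : ℝ) * p v := by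
        refine Finset.sum_congr rfl fun v _ => ?_
        rw [Finset.sum_ite, Finset.sum_const, Finset.sum_const_zero, add_zero, nsmul_eq_mul]
    _ = ∑ v : ∀ i, α i, (if ∀ i ∈ A ∩ B, v i = x i
          then ∏ i ∈ (A ∪ B)ᶜ, (Fintype.card (α i) : ℝ) else 0) * p v := by
        refine Finset.sum_congr rfl fun v _ => ?_
        rw [cardval v]
    _ = (∏ i ∈ (A ∪ B)ᶜ, (Fintype.card (α i) : ℝ)) * margProb p (A ∩ B) x := by
        rw [margProb, Finset.mul_sum]
        refine Finset.sum_congr rfl fun v _ => ?_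
        split <;> simp

variable [∀ i, Nonempty (α i)]

lemma condIndep_weak_union (p : (∀ i, α i) → ℝ) (hp : IsDist p) (y : ι) (S : Finset ι)
    (hyS : y ∉ S) (M D : Finset ι) (hMD : M ⊆ D) (hDS : D ⊆ S)
    (hCI : CondIndep p {y} (S \ M) M) : CondIndep p {y} (S \ D) D := by
  intro x hx
  have hsdM : (S \ M) ∪ M = S := Finset.sdiff_union_of_subset (hMD.trans hDS)
  have hsdD : (S \ D) ∪ D = S := Finset.sdiff_union_of_subset hDS
  have hPM : 0 < margProb p M x := lt_of_lt_of_le hx (margProb_mono p hp.1 hMD x)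
  -- set identities
  have I1 : ({y} ∪ D) ∩ ({y} ∪ S) = {y} ∪ D :=
    Finset.inter_eq_left.2 (Finset.union_subset_union_right hDS)
  have U1 : ({y} ∪ D) ∪ ({y} ∪ S) = {y} ∪ S :=
    Finset.union_eq_right.2 (Finset.union_subset_union_right hDS)
  have I2 : ({y} ∪ D) ∩ S = D := by
    rw [Finset.union_inter_distrib_right, Finset.singleton_inter_of_notMem hyS,
      Finset.inter_eq_left.2 hDS, Finset.empty_union]
  have U2 : ({y} ∪ D) ∪ S = {y} ∪ S := by
    rw [Finset.union_assoc, Finset.union_eq_right.2 hDS]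
  -- the key pointwise consequence of hCI
  have hpt : ∀ w : ∀ i, α i,
      (if ∀ i ∈ ({y} ∪ D), w i = x i then margProb p ({y} ∪ S) w else 0) * margProb p M x
      = margProb p ({y} ∪ M) x *
        (if ∀ i ∈ ({y} ∪ D), w i = x i then margProb p S w else 0) := by
    intro w
    by_cases hc : ∀ i ∈ ({y} ∪ D), w i = x i
    · rw [if_pos hc, if_pos hc]
      have hMw : margProb p M w = margProb p M x :=
        margProb_congr p M (fun i hi => hc i (Finset.mem_union_right _ (hMD hi)))
      have hyMw : margProb p ({y} ∪ M) w = margProb p ({y} ∪ M) x :=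
        margProb_congr p ({y} ∪ M) (fun i hi => hc i
          (Finset.union_subset_union_right hMD hi))
      have h := hCI w (by rw [hMw]; exact hPM)
      rw [Finset.union_assoc, hsdM] at h
      rw [hMw, hyMw] at h
      linarith [h]
    · rw [if_neg hc, if_neg hc, zero_mul, mul_zero]
  have hsum : (∑ w : ∀ i, α i,
        if ∀ i ∈ ({y} ∪ D), w i = x i then margProb p ({y} ∪ S) w else 0) * margProb p M x
      = margProb p ({y} ∪ M) x * (∑ w : ∀ i, α i,
        if ∀ i ∈ ({y} ∪ D), w i = x i then margProb p S w else 0) := by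
    rw [Finset.sum_mul, Finset.mul_sum]
    exact Finset.sum_congr rfl fun w _ => hpt w
  rw [sum_cond_margProb, sum_cond_margProb, I1, U1, I2, U2] at hsum
  -- cancel the positive constant N
  have hN : (0 : ℝ) < ∏ i ∈ ({y} ∪ S)ᶜ, (Fintype.card (α i) : ℝ) :=
    Finset.prod_pos fun i _ => by exact_mod_cast Fintype.card_pos
  have dagger : margProb p ({y} ∪ D) x * margProb p M x
      = margProb p ({y} ∪ M) x * margProb p D x := by
    apply mul_left_cancel₀ hN.ne'
    ring_nf
    ring_nf at hsum
    linarith [hsum]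
  -- conclude
  have hx0 := hCI x hPM
  rw [Finset.union_assoc, hsdM] at hx0
  have goal' : ({y} ∪ (S \ D)) ∪ D = {y} ∪ S := by rw [Finset.union_assoc, hsdD]
  rw [goal', hsdD]
  apply mul_left_cancel₀ hPM.ne'
  linear_combination margProb p D x * hx0 - margProb p S x * dagger


/-- half of Lemma 5: an essential variable for `Y` belongs to every
Markov boundary of `Y` within `S`. -/
theorem essential_mem_every_markov_boundary
    (p : (∀ i, α i) → ℝ) (hp : IsDist p)
    (y : ι) (S : Finset ι) (hyS : y ∉ S)
    (W : ι) (hWS : W ∈ S)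
    (hess : ¬ CondIndep p {y} {W} (S.erase W)) :
    ∀ M, MarkovBoundary p y S M → W ∈ M := by
  intro M hM
  by_contra hWM
  apply hess
  obtain ⟨⟨hMS, hCI⟩, -⟩ := hM
  have hMD : M ⊆ S.erase W := fun i hi =>
    Finset.mem_erase.2 ⟨fun h => hWM (h ▸ hi), hMS hi⟩
  have h := condIndep_weak_union p hp y S hyS M (S.erase W) hMD (Finset.erase_subset _ _) hCI
  rwa [Finset.sdiff_erase_self hWS] at h

end
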